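/- Let D be a finite digraph of order n with maximum out-degree Δ⁺(D) = Δ⁺ and minimum in-degree δ⁻(D) ≥ 1. Then γ×₂(D) ≥ 2n/(Δ⁺ + 1), i.e., (Δ⁺ + 1) · γ×₂(D) ≥ 2n. -/
import Mathlib


open Finset

variable {V : Type*}

/-- The out-degree of `v` in the digraph with arc relation `A`. -/
def outDeg [Fintype V] (A : V → V → Prop) [DecidableRel A] (v : V) : ℕ :=
  (Finset.univ.filter fun u => A v u).card

/-- The in-degree of `v` in the digraph with arc relation `A`. -/
def inDeg [Fintype V] (A : V → V → Prop) [DecidableRel A] (v : V) : ℕ :=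
  (Finset.univ.filter fun u => A u v).card

/-- The minimum in-degree `δ⁻` of the digraph. -/
noncomputable def minInDeg [Fintype V] (A : V → V → Prop) [DecidableRel A] : ℕ :=
  sInf (Set.range fun v => inDeg A v)

/-- The maximum out-degree `Δ⁺` of the digraph. -/
noncomputable def maxOutDeg [Fintype V] (A : V → V → Prop) [DecidableRel A] : ℕ :=
  sSup (Set.range fun v => outDeg A v)

/-- The converse digraph `D⁻¹`, obtained by reversing every arc. -/
def converse (A : V → V → Prop) : V → V → Prop := fun u v => A v u

instance converseDecidable (A : V → V → Prop) [h : DecidableRel A] :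
    DecidableRel (converse A) := fun u v => h v u

/-- `B` is a `k`-limited packing: `|N⁺[v] ∩ B| ≤ k` for every vertex `v`. -/
def IsLimitedPacking [DecidableEq V] (A : V → V → Prop) [DecidableRel A] (k : ℕ)
    (B : Finset V) : Prop :=
  ∀ v : V, (B.filter fun u => u = v ∨ A v u).card ≤ k

/-- The `k`-limited packing number `L_k(D)` (`k = 1` gives the packing number `ρ(D)`). -/
noncomputable def limitedPackingNumber [Fintype V] [DecidableEq V] (A : V → V → Prop) [DecidableRel A]
    (k : ℕ) : ℕ :=
  sSup {m | ∃ B : Finset V, IsLimitedPacking A k B ∧ B.card = m}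

/-- `S` is an `r`-tuple dominating set: every vertex is dominated by at least `r`
vertices of `S` (where `u` dominates `v` if `u = v` or `(u,v)` is an arc). -/
def IsTupleDominating [DecidableEq V] (A : V → V → Prop) [DecidableRel A] (r : ℕ)
    (S : Finset V) : Prop :=
  ∀ v : V, r ≤ (S.filter fun u => u = v ∨ A u v).card

/-- The `r`-tuple domination number `γ×r(D)` (`r = 1` gives the domination number `γ(D)`,
`r = 2` the double domination number `γ×₂(D)`). -/
noncomputable def tupleDominationNumber [Fintype V] [DecidableEq V] (A : V → V → Prop) [DecidableRel A]
    (r : ℕ) : ℕ :=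
  sInf {m | ∃ S : Finset V, IsTupleDominating A r S ∧ S.card = m}

/-- `S` is a total 2-dominating set: the subdigraph induced by `S` has no isolated
vertices, and every vertex outside `S` has at least two in-neighbors in `S`. -/
def IsTotal2Dominating [DecidableEq V] (A : V → V → Prop) [DecidableRel A]
    (S : Finset V) : Prop :=
  (∀ v ∈ S, ∃ u ∈ S, u ≠ v ∧ (A u v ∨ A v u)) ∧
    ∀ v : V, v ∉ S → 2 ≤ (S.filter fun u => A u v).card

/-- The total 2-domination number `γ×₂ᵗ(D)`. -/
noncomputable def total2DominationNumber [Fintype V] [DecidableEq V] (A : V → V → Prop)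
    [DecidableRel A] : ℕ :=
  sInf {m | ∃ S : Finset V, IsTotal2Dominating A S ∧ S.card = m}

/-- `B` is a total 2-limited packing: every vertex of `B` is adjacent with at most one
vertex of `B`, and every vertex outside `B` has at most two out-neighbors in `B`. -/
def IsTotal2LimitedPacking [DecidableEq V] (A : V → V → Prop) [DecidableRel A]
    (B : Finset V) : Prop :=
  (∀ v ∈ B, (B.filter fun u => u ≠ v ∧ (A u v ∨ A v u)).card ≤ 1) ∧
    ∀ v : V, v ∉ B → (B.filter fun u => A v u).card ≤ 2

/-- The total 2-limited packing number `L₂ᵗ(D)`. -/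
noncomputable def total2LimitedPackingNumber [Fintype V] [DecidableEq V] (A : V → V → Prop)
    [DecidableRel A] : ℕ :=
  sSup {m | ∃ B : Finset V, IsTotal2LimitedPacking A B ∧ B.card = m}

/-- An end-vertex: a vertex `v` with `deg⁺(v) + deg⁻(v) = 1`. -/
def IsEndVertex [Fintype V] (A : V → V → Prop) [DecidableRel A] (v : V) : Prop :=
  outDeg A v + inDeg A v = 1

/-- A penultimate vertex: a vertex adjacent with an end-vertex. -/
def IsPenultimate [Fintype V] (A : V → V → Prop) [DecidableRel A] (v : V) : Prop :=
  ∃ u : V, IsEndVertex A u ∧ (A u v ∨ A v u)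
/-- If `δ⁻(D) ≥ 1`, then `(Δ⁺ + 1) · γ×₂(D) ≥ 2n`. -/
theorem stmt5 {V : Type*} [Fintype V] [DecidableEq V] (A : V → V → Prop) [DecidableRel A]
    (hloopless : ∀ v : V, ¬ A v v) (n : ℕ) (hn : Fintype.card V = n)
    (hδ : 1 ≤ minInDeg A) :
    2 * n ≤ (maxOutDeg A + 1) * tupleDominationNumber A 2 := by
  -- every vertex has in-degree ≥ 1
  have hin : ∀ v : V, 1 ≤ inDeg A v := fun v =>
    le_trans hδ (Nat.sInf_le ⟨v, rfl⟩)
  -- univ is a 2-tuple dominating set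
  have huniv : IsTupleDominating A 2 (Finset.univ : Finset V) := by
    intro v
    obtain ⟨u, hu⟩ : ∃ u, A u v := by
      obtain ⟨u, hu⟩ := Finset.card_pos.mp (hin v : 0 < (Finset.univ.filter fun u => A u v).card)
      exact ⟨u, (Finset.mem_filter.mp hu).2⟩
    have huv : u ≠ v := fun h => hloopless v (h ▸ hu)
    have hsub : ({u, v} : Finset V) ⊆ Finset.univ.filter fun w => w = v ∨ A w v := by
      intro w hw
      simp only [Finset.mem_insert, Finset.mem_singleton] at hw
      rcases hw with rfl | rfl
      · exact Finset.mem_filter.mpr ⟨Finset.mem_univ _, Or.inr hu⟩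
      · exact Finset.mem_filter.mpr ⟨Finset.mem_univ _, Or.inl rfl⟩
    calc 2 = ({u, v} : Finset V).card := (Finset.card_pair huv).symm
      _ ≤ _ := Finset.card_le_card hsub
  have hne : {m | ∃ S : Finset V, IsTupleDominating A 2 S ∧ S.card = m}.Nonempty :=
    ⟨_, Finset.univ, huniv, rfl⟩
  obtain ⟨S, hS, hScard⟩ := Nat.sInf_mem hne
  rw [show tupleDominationNumber A 2 = S.card from hScard.symm]
  -- double counting
  have key : 2 * n ≤ ∑ v : V, (S.filter fun u => u = v ∨ A u v).card := by
    calc 2 * n = ∑ _v : V, 2 := by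
          rw [Finset.sum_const, ← hn, Finset.card_univ, smul_eq_mul, mul_comm]
      _ ≤ _ := Finset.sum_le_sum fun v _ => hS v
  have swap : ∑ v : V, (S.filter fun u => u = v ∨ A u v).card
      = ∑ u ∈ S, (Finset.univ.filter fun v => u = v ∨ A u v).card := by
    simp only [Finset.card_filter]
    exact Finset.sum_comm
  have bound : ∀ u ∈ S, (Finset.univ.filter fun v => u = v ∨ A u v).card
      ≤ maxOutDeg A + 1 := by
    intro u _
    have h1 : (Finset.univ.filter fun v => u = v ∨ A u v).card
        ≤ (Finset.univ.filter fun v => u = v).card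
          + (Finset.univ.filter fun v => A u v).card := by
      rw [Finset.filter_or]
      exact Finset.card_union_le _ _
    have h2 : (Finset.univ.filter fun v => u = v).card = 1 := by
      rw [show (Finset.univ.filter fun v => u = v) = {u} by
        ext w; simp [eq_comm]]
      simp
    have h3 : (Finset.univ.filter fun v => A u v).card ≤ maxOutDeg A :=
      le_csSup (Set.Finite.bddAbove (Set.finite_range _)) ⟨u, rfl⟩
    omega
  calc 2 * n ≤ ∑ u ∈ S, (Finset.univ.filter fun v => u = v ∨ A u v).card := by
        rw [← swap]; exact key
    _ ≤ ∑ _u ∈ S, (maxOutDeg A + 1) := Finset.sum_le_sum bound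
    _ = (maxOutDeg A + 1) * S.card := by rw [Finset.sum_const, smul_eq_mul, mul_comm]
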